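/- arXiv:1912.02540 — 3 statements merged into one kernel-verified Lean document; each statement's English description precedes it below -/
import Mathlib

section
/- Let δ₀ ∈ (0,1), λ ∈ (0,1], K : [1/λ,∞) → (δ₀, 1/δ₀) continuously differentiable with ‖K'‖_{L¹([1/λ,∞))} ≤ 1/δ₀, and G : [1/λ,∞) → ℝ with ‖G‖_{L¹([1/λ,∞))} ≤ λ/δ₀. Suppose y is a positive, strictly increasing solution of y'' − λ²K²y + Gy = 0 on [1/λ,∞) with y(1/λ) = 1 and y'(1/λ) ∈ (0, λ/δ₀). Then there exist constants 0 < c ≤ C depending only on δ₀ (not on λ) such that c·exp(λ∫_{1/λ}^r K(τ)dτ) ≤ y(r) ≤ C·exp(λ∫_{1/λ}^r K(τ)dτ) for all r ≥ 1/λ. -/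
open Set Real MeasureTheory

set_option maxHeartbeats 1000000

lemma tri_aux {a s R : ℝ} (ha : 0 < a) (hsR : s ≤ R) :
    ∫ r in s..R, Real.exp (-(a * (r - s))) ≤ 1 / a := by
  have key : ∫ r in s..R, Real.exp (-(a * (r - s)))
      = (-(1/a)) * Real.exp (-(a * (R - s))) - (-(1/a)) * Real.exp (-(a * (s - s))) := by
    apply intervalIntegral.integral_eq_sub_of_hasDerivAt
    · intro x hx
      have : HasDerivAt (fun r : ℝ => -(a * (r - s))) (-a) x := by
        exact (((hasDerivAt_id x).sub_const s).const_mul a).neg.congr_deriv (by ring)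
      have := (this.exp).const_mul (-(1/a))
      convert this using 1
      case e'_4 => rfl
      field_simp
    · apply Continuous.intervalIntegrable; continuity
  rw [key]
  have h1 : Real.exp (-(a * (R - s))) ≤ 1 := Real.exp_le_one_iff.2 (by nlinarith)
  have h3 : Real.exp (-(a * (s-s))) = 1 := by simp
  rw [h3, div_eq_inv_mul]
  nlinarith [Real.exp_pos (-(a * (R - s))), inv_pos.2 ha,
    mul_pos (inv_pos.2 ha) (Real.exp_pos (-(a * (R - s))))]

lemma tri {s0 R a : ℝ} (hs : s0 ≤ R) (ha : 0 < a) {P : ℝ → ℝ}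
    (hP : ContinuousOn P (Icc s0 R))
    (hPa : ∀ s r, s0 ≤ s → s ≤ r → a * (r - s) ≤ P r - P s)
    {h : ℝ → ℝ} (hh : IntegrableOn h (Ioc s0 R)) (hh0 : ∀ s, 0 ≤ h s) :
    (∫ r in Ioc s0 R, ∫ s in Ioc s0 r, Real.exp (P s - P r) * h s)
      ≤ (1/a) * ∫ s in Ioc s0 R, h s := by
  set μ := volume.restrict (Ioc s0 R) with hμ
  haveI : IsFiniteMeasure μ := ⟨by
    rw [hμ, Measure.restrict_apply_univ]; exact measure_Ioc_lt_top⟩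
  set g : ℝ × ℝ → ℝ := fun z => Real.exp (P z.2 - P z.1) * h z.2 with hg
  set S : Set (ℝ × ℝ) := {z : ℝ × ℝ | z.2 ≤ z.1} with hS
  have hSm : MeasurableSet S := measurableSet_le measurable_snd measurable_fst
  set F : ℝ × ℝ → ℝ := S.indicator g with hF
  have hF0 : ∀ z, 0 ≤ F z := by
    intro z
    apply indicator_nonneg
    intro z' _
    exact mul_nonneg (Real.exp_pos _).le (hh0 _)
  have hprodrw : μ.prod μ = (volume.prod volume).restrict ((Ioc s0 R) ×ˢ (Ioc s0 R)) := by
    rw [hμ, Measure.prod_restrict]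
  have hgm : AEStronglyMeasurable g (μ.prod μ) := by
    apply AEStronglyMeasurable.mul
    · rw [hprodrw]
      apply ContinuousOn.aestronglyMeasurable _ (measurableSet_Ioc.prod measurableSet_Ioc)
      apply Real.continuous_exp.comp_continuousOn
      exact (hP.comp continuous_snd.continuousOn (fun z hz => Ioc_subset_Icc_self hz.2)).sub
        (hP.comp continuous_fst.continuousOn (fun z hz => Ioc_subset_Icc_self hz.1))
    · exact (hh.aestronglyMeasurable).comp_snd
  have hFm : AEStronglyMeasurable F (μ.prod μ) := hgm.indicator hSm
  have hdom : ∀ᵐ z ∂(μ.prod μ), ‖F z‖ ≤ h z.2 := by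
    rw [hprodrw]
    filter_upwards [ae_restrict_mem (measurableSet_Ioc.prod measurableSet_Ioc)] with z hz
    rcases hz with ⟨hz1, hz2⟩
    by_cases hzS : z ∈ S
    · have hle2 : z.2 ≤ z.1 := hzS
      rw [hF, indicator_of_mem hzS, hg]
      have hle : P z.2 ≤ P z.1 := by
        have := hPa z.2 z.1 hz2.1.le hle2
        nlinarith [mul_nonneg ha.le (sub_nonneg.2 hle2)]
      have he : Real.exp (P z.2 - P z.1) ≤ 1 := Real.exp_le_one_iff.2 (by linarith)
      rw [Real.norm_eq_abs, abs_mul, abs_of_pos (Real.exp_pos _), abs_of_nonneg (hh0 _)]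
      nlinarith [hh0 z.2, Real.exp_pos (P z.2 - P z.1)]
    · rw [hF, indicator_of_notMem hzS]
      simpa using hh0 z.2
  have hmaj : Integrable (fun z : ℝ × ℝ => h z.2) (μ.prod μ) := by
    have := (integrable_const (1:ℝ) : Integrable _ μ).mul_prod hh
    simpa using this
  have hFint : Integrable F (μ.prod μ) := Integrable.mono' hmaj hFm hdom
  have hLHS : (∫ r in Ioc s0 R, ∫ s in Ioc s0 r, Real.exp (P s - P r) * h s)
      = ∫ r, (∫ s, F (r, s) ∂μ) ∂μ := by
    rw [hμ]
    apply setIntegral_congr_ae measurableSet_Ioc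
    filter_upwards with r hr
    rw [← hμ]
    have : ∫ s, F (r, s) ∂μ
        = ∫ s in Ioc s0 R, (Ioc s0 r).indicator (fun s => Real.exp (P s - P r) * h s) s := by
      rw [hμ]
      apply setIntegral_congr_ae measurableSet_Ioc
      filter_upwards with s hs
      by_cases hsr : s ≤ r
      · rw [indicator_of_mem (show s ∈ Ioc s0 r from ⟨hs.1, hsr⟩), hF,
          indicator_of_mem (show (r,s) ∈ S from hsr)]
      · rw [indicator_of_notMem (fun hmem => hsr hmem.2), hF,
          indicator_of_notMem (show (r,s) ∉ S from hsr)]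
    rw [this, setIntegral_indicator measurableSet_Ioc,
      Ioc_inter_Ioc, max_self, min_eq_right hr.2]
  rw [hLHS]
  rw [MeasureTheory.integral_integral_swap
    (by exact hFint : Integrable (Function.uncurry (fun r s => F (r, s))) (μ.prod μ))]
  have hinner : ∀ s ∈ Ioc s0 R, (∫ r, F (r, s) ∂μ) ≤ (1/a) * h s := by
    intro s hsIoc
    have step1 : (∫ r, F (r, s) ∂μ)
        ≤ ∫ r in Ioc s0 R, (Icc s R).indicator (fun r => Real.exp (-(a * (r - s))) * h s) r := by
      rw [hμ]
      apply setIntegral_mono_on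
      · -- integrability of F (·, s) on Ioc s0 R
        have : (fun r => F (r, s)) = (Ici s).indicator (fun r => Real.exp (P s - P r) * h s) := by
          funext r
          by_cases hsr : s ≤ r
          · rw [hF, indicator_of_mem (show (r,s) ∈ S from hsr),
              indicator_of_mem (show r ∈ Ici s from hsr)]
          · rw [hF, indicator_of_notMem (show (r,s) ∉ S from hsr),
              indicator_of_notMem (show r ∉ Ici s from hsr)]
        rw [this]
        have : IntegrableOn (fun r => Real.exp (P s - P r) * h s) (Ioc s0 R) := by
          apply MeasureTheory.Integrable.mul_const
          apply (ContinuousOn.integrableOn_compact isCompact_Icc _).mono_set Ioc_subset_Icc_self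
          exact Real.continuous_exp.comp_continuousOn (continuousOn_const.sub hP)
        exact this.indicator measurableSet_Ici
      · have : IntegrableOn (fun r => Real.exp (-(a * (r - s))) * h s) (Ioc s0 R) := by
          apply MeasureTheory.Integrable.mul_const
          apply Continuous.integrableOn_Ioc; continuity
        exact this.indicator measurableSet_Icc
      · exact measurableSet_Ioc
      · intro r hr
        by_cases hrs : (r, s) ∈ S
        · have hsr : s ≤ r := hrs
          rw [hF, indicator_of_mem hrs,
            indicator_of_mem (show r ∈ Icc s R from ⟨hsr, hr.2⟩)]
          have hb := hPa s r hsIoc.1.le hsr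
          have : Real.exp (P s - P r) ≤ Real.exp (-(a * (r - s))) :=
            Real.exp_le_exp.2 (by linarith)
          exact mul_le_mul_of_nonneg_right this (hh0 s)
        · rw [hF, indicator_of_notMem hrs]
          apply indicator_nonneg
          intro r' _
          exact mul_nonneg (Real.exp_pos _).le (hh0 s)
    have step2 : ∫ r in Ioc s0 R, (Icc s R).indicator (fun r => Real.exp (-(a * (r - s))) * h s) r
        ≤ (1/a) * h s := by
      rw [setIntegral_indicator measurableSet_Icc]
      have hset : Ioc s0 R ∩ Icc s R = Icc s R := by
        apply inter_eq_self_of_subset_right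
        intro x hx
        exact ⟨lt_of_lt_of_le hsIoc.1 hx.1, hx.2⟩
      rw [hset, integral_Icc_eq_integral_Ioc, ← intervalIntegral.integral_of_le hsIoc.2,
        intervalIntegral.integral_mul_const]
      have := mul_le_mul_of_nonneg_right (tri_aux ha hsIoc.2) (hh0 s)
      linarith
    exact le_trans step1 step2
  calc ∫ s, (∫ r, F (r, s) ∂μ) ∂μ ≤ ∫ s, (1/a) * h s ∂μ := by
        apply integral_mono_of_nonneg
        · filter_upwards with s
          exact integral_nonneg fun r => hF0 _
        · exact (hh.const_mul _)
        · rw [hμ]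
          filter_upwards [ae_restrict_mem measurableSet_Ioc] with s hs
          exact hinner s hs
    _ = (1/a) * ∫ s in Ioc s0 R, h s := by rw [hμ, integral_const_mul]


theorem stmt_1 (δ₀ : ℝ) (hδ : δ₀ ∈ Ioo (0:ℝ) 1) :
    ∃ c C : ℝ, 0 < c ∧ c ≤ C ∧
      ∀ (lam : ℝ), lam ∈ Ioc (0:ℝ) 1 →
      ∀ (K K' G y y' y'' : ℝ → ℝ),
        (∀ r : ℝ, 1/lam ≤ r → K r ∈ Ioo δ₀ δ₀⁻¹) →
        (∀ r : ℝ, 1/lam ≤ r → HasDerivAt K (K' r) r) →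
        ContinuousOn K' (Ici (1/lam)) →
        IntegrableOn K' (Ici (1/lam)) →
        (∫ r in Ici (1/lam), |K' r|) ≤ δ₀⁻¹ →
        IntegrableOn G (Ici (1/lam)) →
        (∫ r in Ici (1/lam), |G r|) ≤ lam / δ₀ →
        (∀ r : ℝ, 1/lam ≤ r → HasDerivAt y (y' r) r) →
        (∀ r : ℝ, 1/lam ≤ r → HasDerivAt y' (y'' r) r) →
        (∀ r : ℝ, 1/lam ≤ r → y'' r - lam^2 * (K r)^2 * y r + G r * y r = 0) →
        (∀ r : ℝ, 1/lam ≤ r → 0 < y r) →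
        StrictMonoOn y (Ici (1/lam)) →
        y (1/lam) = 1 →
        y' (1/lam) ∈ Ioo 0 (lam / δ₀) →
        ∀ r : ℝ, 1/lam ≤ r →
          c * Real.exp (lam * ∫ τ in (1/lam)..r, K τ) ≤ y r ∧
          y r ≤ C * Real.exp (lam * ∫ τ in (1/lam)..r, K τ) := by
  obtain ⟨hδ0, hδ1⟩ := hδ
  refine ⟨Real.exp (-(3/δ₀^2)), Real.exp (3/δ₀^2), Real.exp_pos _,
    Real.exp_le_exp.2 (by nlinarith [sq_nonneg δ₀, pow_pos hδ0 2, div_pos (by norm_num : (0:ℝ)<3) (pow_pos hδ0 2)]), ?_⟩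
  intro lam hlam K K' G y y' y'' hK hKd hK'c hK'i hK'1 hGi hG1 hyd hy'd hODE hypos hmono hy1 hy'0
    r hr
  have hlam0 : 0 < lam := hlam.1
  set s0 : ℝ := 1/lam with hs0def
  have hs0pos : 0 < s0 := by positivity
  suffices hmain : |Real.log (y r) - lam * ∫ τ in s0..r, K τ| ≤ 3/δ₀^2 by
    obtain ⟨h1, h2⟩ := abs_le.1 hmain
    have hyr := hypos r hr
    constructor
    · rw [← Real.exp_log hyr, ← Real.exp_add]; exact Real.exp_le_exp.2 (by linarith)
    · rw [← Real.exp_log hyr, ← Real.exp_add]; exact Real.exp_le_exp.2 (by linarith)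
  -- setup
  set w : ℝ → ℝ := fun t => y' t / y t - lam * K t with hwdef
  set p : ℝ → ℝ := fun t => y' t / y t + lam * K t with hpdef
  set h : ℝ → ℝ := fun t => G t + lam * K' t with hhdef
  set P : ℝ → ℝ := fun x => ∫ t in s0..x, p t with hPdef
  set a : ℝ := lam * δ₀ with hadef
  have ha0 : 0 < a := mul_pos hlam0 hδ0
  have hyne : ∀ t, s0 ≤ t → y t ≠ 0 := fun t ht => (hypos t ht).ne'
  -- y' nonneg
  have hy'nn : ∀ t, s0 ≤ t → 0 ≤ y' t := by
    intro t ht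
    have hd := hasDerivAt_iff_tendsto_slope.1 (hyd t ht)
    have h2 : Filter.Tendsto (slope y t) (nhdsWithin t (Ioi t)) (nhds (y' t)) :=
      hd.mono_left (nhdsWithin_mono t (fun x hx => ne_of_gt hx))
    refine ge_of_tendsto h2 ?_
    filter_upwards [self_mem_nhdsWithin] with x hx
    have hyx : y t < y x := hmono ht (le_trans ht (le_of_lt hx)) hx
    rw [slope_def_field]
    have : (0:ℝ) < x - t := sub_pos.2 hx
    apply div_nonneg (by linarith) this.le
  -- continuities
  have hycont : ContinuousOn y (Ici s0) :=
    fun t ht => (hyd t ht).continuousAt.continuousWithinAt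
  have hy'cont : ContinuousOn y' (Ici s0) :=
    fun t ht => (hy'd t ht).continuousAt.continuousWithinAt
  have hKcont : ContinuousOn K (Ici s0) :=
    fun t ht => (hKd t ht).continuousAt.continuousWithinAt
  have hvcont : ContinuousOn (fun t => y' t / y t) (Ici s0) := hy'cont.div hycont hyne
  have hwcont : ContinuousOn w (Ici s0) := hvcont.sub (continuousOn_const.mul hKcont)
  have hpcont : ContinuousOn p (Ici s0) := hvcont.add (continuousOn_const.mul hKcont)
  -- p lower bound
  have hpa : ∀ t, s0 ≤ t → a ≤ p t := by
    intro t ht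
    have hv0 : 0 ≤ y' t / y t := div_nonneg (hy'nn t ht) (hypos t ht).le
    have hKt := (hK t ht).1
    have : lam * δ₀ ≤ lam * K t := mul_le_mul_of_nonneg_left hKt.le hlam0.le
    simp only [hpdef, hadef]
    linarith
  -- interval integrability of p
  have hpint : ∀ u t : ℝ, s0 ≤ u → IntervalIntegrable p volume u t → True := fun _ _ _ _ => trivial
  have hpii : ∀ u t : ℝ, s0 ≤ u → u ≤ t → IntervalIntegrable p volume u t := by
    intro u t hu hut
    apply ContinuousOn.intervalIntegrable
    apply hpcont.mono
    rw [uIcc_of_le hut]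
    intro x hx; exact le_trans hu hx.1
  -- P increments
  have hPa : ∀ s t, s0 ≤ s → s ≤ t → a * (t - s) ≤ P t - P s := by
    intro s t hs hst
    have hdiff : P t - P s = ∫ u in s..t, p u := by
      simp only [hPdef]
      exact intervalIntegral.integral_interval_sub_left (hpii s0 t (le_refl s0) (le_trans hs hst))
        (hpii s0 s (le_refl s0) hs)
    have hconst : ∫ u in s..t, a = a * (t - s) := by
      rw [intervalIntegral.integral_const, smul_eq_mul]; ring
    rw [hdiff, ← hconst]
    apply intervalIntegral.integral_mono_on hst intervalIntegrable_const
      (hpii s t hs hst)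
    intro u hu
    exact hpa u (le_trans hs hu.1)
  -- P continuity
  have hPcont : ∀ T, s0 ≤ T → ContinuousOn P (Icc s0 T) := by
    intro T hT
    have := intervalIntegral.continuousOn_primitive_interval
      (show IntegrableOn p (uIcc s0 T) volume by
        rw [uIcc_of_le hT]
        exact (hpcont.mono (Icc_subset_Ici_self)).integrableOn_compact isCompact_Icc)
    rw [uIcc_of_le hT] at this
    exact this
  -- P derivative
  have hPd : ∀ t, s0 < t → HasDerivAt P (p t) t := by
    intro t ht
    apply intervalIntegral.integral_hasDerivAt_right (hpii s0 t (le_refl s0) ht.le)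
    · exact ⟨Ici s0, Ici_mem_nhds ht, hpcont.aestronglyMeasurable measurableSet_Ici⟩
    · exact (hpcont t ht.le).continuousAt (Ici_mem_nhds ht)
  -- w derivative (Riccati)
  have hwd : ∀ t, s0 ≤ t → HasDerivAt w (-(p t * w t) - h t) t := by
    intro t ht
    have hyt := hypos t ht
    have hvd : HasDerivAt (fun u => y' u / y u) ((y'' t * y t - y' t * y' t) / (y t)^2) t :=
      (hy'd t ht).div (hyd t ht) hyt.ne'
    have hKd' : HasDerivAt (fun u => lam * K u) (lam * K' t) t := (hKd t ht).const_mul lam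
    have hder := hvd.sub hKd'
    have hODEt := hODE t ht
    have hy'' : y'' t = lam^2 * (K t)^2 * y t - G t * y t := by linarith
    have heq : (y'' t * y t - y' t * y' t) / (y t)^2 - lam * K' t = -(p t * w t) - h t := by
      simp only [hpdef, hwdef, hhdef]
      rw [hy'']
      field_simp
      ring
    rw [heq] at hder
    exact hder
  -- h interval integrable
  have hhint : IntegrableOn h (Ici s0) volume := by
    simp only [hhdef]
    exact hGi.add (hK'i.const_mul lam)
  have hhii : ∀ T, s0 ≤ T → IntervalIntegrable h volume s0 T := by
    intro T hT
    apply IntegrableOn.intervalIntegrable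
    rw [uIcc_of_le hT]
    exact hhint.mono_set Icc_subset_Ici_self
  -- the FTC identity
  have hB : ∀ R, s0 ≤ R →
      (∫ t in s0..R, -(Real.exp (P t) * h t)) = Real.exp (P R) * w R - Real.exp (P s0) * w s0 := by
    intro R hR
    apply intervalIntegral.integral_eq_sub_of_hasDeriv_right
    · rw [uIcc_of_le hR]
      exact ((Real.continuous_exp.comp_continuousOn (hPcont R hR)).mul
        (hwcont.mono Icc_subset_Ici_self))
    · rw [min_eq_left hR, max_eq_right hR]
      intro x hx
      have hd := ((hPd x hx.1).exp.mul (hwd x hx.1.le))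
      have : Real.exp (P x) * p x * w x + Real.exp (P x) * (-(p x * w x) - h x)
          = -(Real.exp (P x) * h x) := by ring
      rw [this] at hd
      exact hd.hasDerivWithinAt
    · exact (((hhii R hR).continuousOn_mul
        (Real.continuous_exp.comp_continuousOn (by rw [uIcc_of_le hR]; exact hPcont R hR))).neg)
  have hPs0 : P s0 = 0 := intervalIntegral.integral_same
  -- pointwise bound on |w|
  have hwb : ∀ R, s0 ≤ R →
      |w R| ≤ Real.exp (-(P R)) * (|w s0| + ∫ t in s0..R, Real.exp (P t) * |h t|) := by
    intro R hR
    have hBB := hB R hR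
    rw [hPs0, Real.exp_zero, one_mul] at hBB
    have h1 : Real.exp (P R) * w R = w s0 - ∫ t in s0..R, Real.exp (P t) * h t := by
      rw [intervalIntegral.integral_neg] at hBB
      linarith
    have h2 : |Real.exp (P R) * w R| ≤ |w s0| + ∫ t in s0..R, Real.exp (P t) * |h t| := by
      rw [h1]
      refine le_trans (abs_sub _ _) ?_
      gcongr
      refine le_trans (intervalIntegral.abs_integral_le_integral_abs hR) ?_
      apply le_of_eq
      apply intervalIntegral.integral_congr
      intro t _
      show |Real.exp (P t) * h t| = Real.exp (P t) * |h t|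
      rw [abs_mul, abs_of_pos (Real.exp_pos _)]
    calc |w R| = Real.exp (-(P R)) * |Real.exp (P R) * w R| := by
          rw [abs_mul, abs_of_pos (Real.exp_pos _), ← mul_assoc, ← Real.exp_add]
          simp
      _ ≤ _ := mul_le_mul_of_nonneg_left h2 (Real.exp_pos _).le
  have hIocIci : Ioc s0 r ⊆ Ici s0 := fun x hx => le_of_lt hx.1
  -- the primitive A
  set A : ℝ → ℝ := fun x => ∫ t in s0..x, Real.exp (P t) * |h t| with hAdef
  have hexpPii : IntervalIntegrable (fun t => Real.exp (P t) * |h t|) volume s0 r := by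
    apply IntervalIntegrable.continuousOn_mul ((hhii r hr).abs)
    rw [uIcc_of_le hr]
    exact Real.continuous_exp.comp_continuousOn (hPcont r hr)
  have hAcont : ContinuousOn A (Icc s0 r) := by
    have := intervalIntegral.continuousOn_primitive_interval' hexpPii left_mem_uIcc
    rw [uIcc_of_le hr] at this
    exact this
  have hexpP : ContinuousOn (fun t => Real.exp (-(P t))) (Icc s0 r) :=
    Real.continuous_exp.comp_continuousOn (hPcont r hr).neg
  -- step 1
  have hstep1 : ∫ t in Ioc s0 r, |w t| ≤ ∫ t in Ioc s0 r, Real.exp (-(P t)) * (|w s0| + A t) := by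
    apply setIntegral_mono_on
    · exact (((hwcont.mono Icc_subset_Ici_self).abs).integrableOn_compact
        isCompact_Icc).mono_set Ioc_subset_Icc_self
    · exact ((hexpP.mul (continuousOn_const.add hAcont)).integrableOn_compact
        isCompact_Icc).mono_set Ioc_subset_Icc_self
    · exact measurableSet_Ioc
    · intro t ht
      exact hwb t ht.1.le
  -- split
  have hsplitint : ∫ t in Ioc s0 r, Real.exp (-(P t)) * (|w s0| + A t)
      = (∫ t in Ioc s0 r, Real.exp (-(P t)) * |w s0|)
        + ∫ t in Ioc s0 r, Real.exp (-(P t)) * A t := by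
    rw [← integral_add]
    · apply setIntegral_congr_ae measurableSet_Ioc
      filter_upwards with t _
      ring
    · exact ((hexpP.mul continuousOn_const).integrableOn_compact
        isCompact_Icc).mono_set Ioc_subset_Icc_self
    · exact ((hexpP.mul hAcont).integrableOn_compact isCompact_Icc).mono_set Ioc_subset_Icc_self
  -- step 3 : first piece
  have hstep3 : (∫ t in Ioc s0 r, Real.exp (-(P t)) * |w s0|) ≤ (1/a) * |w s0| := by
    have hmono1 : (∫ t in Ioc s0 r, Real.exp (-(P t)) * |w s0|)
        ≤ ∫ t in Ioc s0 r, Real.exp (-(a * (t - s0))) * |w s0| := by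
      apply setIntegral_mono_on
      · exact ((hexpP.mul continuousOn_const).integrableOn_compact
          isCompact_Icc).mono_set Ioc_subset_Icc_self
      · have hcc : IntegrableOn (fun t => Real.exp (-(a * (t - s0))) * |w s0|) (Icc s0 r) volume := by
          apply Continuous.integrableOn_Icc; continuity
        exact hcc.mono_set Ioc_subset_Icc_self
      · exact measurableSet_Ioc
      · intro t ht
        have := hPa s0 t (le_refl s0) ht.1.le
        rw [hPs0] at this
        have he : Real.exp (-(P t)) ≤ Real.exp (-(a * (t - s0))) :=
          Real.exp_le_exp.2 (by linarith)
        exact mul_le_mul_of_nonneg_right he (abs_nonneg _)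
    refine le_trans hmono1 ?_
    rw [← intervalIntegral.integral_of_le hr, intervalIntegral.integral_mul_const]
    have := mul_le_mul_of_nonneg_right (tri_aux ha0 hr) (abs_nonneg (w s0))
    linarith
  -- step 4 : second piece via Fubini lemma
  have hstep4 : (∫ t in Ioc s0 r, Real.exp (-(P t)) * A t)
      ≤ (1/a) * ∫ t in Ioc s0 r, |h t| := by
    have hrw : (∫ t in Ioc s0 r, Real.exp (-(P t)) * A t)
        = ∫ t in Ioc s0 r, (∫ s in Ioc s0 t, Real.exp (P s - P t) * |h s|) := by
      apply setIntegral_congr_ae measurableSet_Ioc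
      filter_upwards with t ht
      have hA : A t = ∫ s in Ioc s0 t, Real.exp (P s) * |h s| := by
        rw [hAdef]
        exact intervalIntegral.integral_of_le ht.1.le
      rw [hA, ← integral_const_mul]
      apply setIntegral_congr_ae measurableSet_Ioc
      filter_upwards with s _
      rw [← mul_assoc, ← Real.exp_add]
      ring_nf
    rw [hrw]
    exact tri hr ha0 (hPcont r hr) hPa
      ((hhint.mono_set hIocIci).abs) (fun s => abs_nonneg _)
  -- the logarithm identity
  have hvii : IntervalIntegrable (fun t => y' t / y t) volume s0 r := by
    apply ContinuousOn.intervalIntegrable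
    rw [uIcc_of_le hr]
    exact hvcont.mono Icc_subset_Ici_self
  have hKii : IntervalIntegrable (fun t => lam * K t) volume s0 r := by
    apply ContinuousOn.intervalIntegrable
    rw [uIcc_of_le hr]
    exact (continuousOn_const.mul hKcont).mono Icc_subset_Ici_self
  have hlog : ∫ t in s0..r, y' t / y t = Real.log (y r) := by
    have := intervalIntegral.integral_eq_sub_of_hasDerivAt
      (f := fun t => Real.log (y t)) (f' := fun t => y' t / y t)
      (a := s0) (b := r) ?_ hvii
    · rw [this]
      show Real.log (y r) - Real.log (y s0) = Real.log (y r)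
      rw [hy1, Real.log_one, sub_zero]
    · intro t ht
      rw [uIcc_of_le hr] at ht
      exact (hyd t ht.1).log (hyne t ht.1)
  have hwint : ∫ t in s0..r, w t = Real.log (y r) - lam * ∫ τ in s0..r, K τ := by
    have h1 : ∫ t in s0..r, w t = (∫ t in s0..r, y' t / y t) - ∫ t in s0..r, lam * K t :=
      intervalIntegral.integral_sub hvii hKii
    rw [h1, hlog, intervalIntegral.integral_const_mul]
  -- numeric bounds
  have hw0 : |w s0| ≤ lam / δ₀ := by
    have hy's0 := hy'0
    have hKs0 := hK s0 (le_refl s0)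
    have h1 : lam * K s0 < lam * δ₀⁻¹ := mul_lt_mul_of_pos_left hKs0.2 hlam0
    have h2 : 0 < lam * K s0 := mul_pos hlam0 (lt_trans hδ0 hKs0.1)
    have h3 : lam * δ₀⁻¹ = lam / δ₀ := by rw [div_eq_mul_inv]
    have hws0 : w s0 = y' s0 - lam * K s0 := by
      simp only [hwdef, hy1, div_one]
    rw [hws0]
    apply abs_le.2
    constructor
    · have := hy's0.1; linarith
    · have := hy's0.2; linarith
  have hhb : ∫ t in Ioc s0 r, |h t| ≤ lam / δ₀ + lam * δ₀⁻¹ := by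
    have hGabs : IntegrableOn (fun t => |G t|) (Ici s0) volume := hGi.abs
    have hK'abs : IntegrableOn (fun t => lam * |K' t|) (Ici s0) volume :=
      (hK'i.abs).const_mul lam
    have hmaj : IntegrableOn (fun t => |G t| + lam * |K' t|) (Ici s0) volume :=
      hGabs.add hK'abs
    have h1 : ∫ t in Ioc s0 r, |h t| ≤ ∫ t in Ioc s0 r, (|G t| + lam * |K' t|) := by
      apply setIntegral_mono_on
      · exact (hhint.mono_set hIocIci).abs
      · exact hmaj.mono_set hIocIci
      · exact measurableSet_Ioc
      · intro t _
        simp only [hhdef]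
        refine le_trans (abs_add_le _ _) ?_
        rw [abs_mul, abs_of_pos hlam0]
    have h2 : ∫ t in Ioc s0 r, (|G t| + lam * |K' t|) ≤ ∫ t in Ici s0, (|G t| + lam * |K' t|) := by
      apply setIntegral_mono_set hmaj
      · filter_upwards with t
        positivity
      · exact HasSubset.Subset.eventuallyLE hIocIci
    have h3 : ∫ t in Ici s0, (|G t| + lam * |K' t|)
        = (∫ t in Ici s0, |G t|) + lam * ∫ t in Ici s0, |K' t| := by
      rw [integral_add hGabs hK'abs, integral_const_mul]
    have h4 : lam * ∫ t in Ici s0, |K' t| ≤ lam * δ₀⁻¹ :=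
      mul_le_mul_of_nonneg_left hK'1 hlam0.le
    linarith
  -- assemble
  have htotal : |Real.log (y r) - lam * ∫ τ in s0..r, K τ| ≤ (1/a) * |w s0|
      + (1/a) * ∫ t in Ioc s0 r, |h t| := by
    rw [← hwint]
    refine le_trans (intervalIntegral.abs_integral_le_integral_abs hr) ?_
    rw [intervalIntegral.integral_of_le hr]
    calc ∫ t in Ioc s0 r, |w t| ≤ _ := hstep1
      _ = _ := hsplitint
      _ ≤ _ := add_le_add hstep3 hstep4
  refine le_trans htotal ?_
  have ha' : 0 < 1/a := by positivity
  have hfinal : (1/a) * (lam/δ₀) + (1/a) * (lam/δ₀ + lam * δ₀⁻¹) = 3/δ₀^2 := by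
    rw [hadef]
    field_simp
    ring
  have hint_nonneg : 0 ≤ ∫ t in Ioc s0 r, |h t| :=
    integral_nonneg (fun t => abs_nonneg _)
  calc (1/a) * |w s0| + (1/a) * ∫ t in Ioc s0 r, |h t|
      ≤ (1/a) * (lam/δ₀) + (1/a) * (lam/δ₀ + lam * δ₀⁻¹) := by
        apply add_le_add
        · exact mul_le_mul_of_nonneg_left hw0 ha'.le
        · exact mul_le_mul_of_nonneg_left hhb ha'.le
    _ = 3/δ₀^2 := hfinal
end

section
/- Let δ₁ ∈ (0,1), λ₀ > 0, and m̃ : [0,∞) → [δ₁,1/δ₁] continuous with η(t) := ∫₀ᵗ m̃(τ)dτ. There exists c₃ > 0, independent of λ ∈ (0,λ₀], such that the solution y of y'' = λ²m̃(t)²y, y(0)=0, y'(0)=1 satisfies y(t) ≥ c₃·sinh(λη(t))/λ and y'(t) ≥ c₃·cosh(λη(t)) for all t ≥ 0. -/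
open Set Real

lemma monoIcc_aux {f f' : ℝ → ℝ} {a b : ℝ}
    (hf : ∀ t ∈ Icc a b, HasDerivAt f (f' t) t)
    (h0 : ∀ t ∈ Ioo a b, 0 ≤ f' t) : MonotoneOn f (Icc a b) := by
  apply monotoneOn_of_deriv_nonneg (convex_Icc a b)
    (fun t ht => (hf t ht).continuousAt.continuousWithinAt)
  · intro t ht
    rw [interior_Icc] at ht
    exact (hf t (Ioo_subset_Icc_self ht)).differentiableAt.differentiableWithinAt
  · intro t ht
    rw [interior_Icc] at ht
    rw [(hf t (Ioo_subset_Icc_self ht)).deriv]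
    exact h0 t ht

lemma le_of_deriv_nonneg_Ici {f f' : ℝ → ℝ} {a : ℝ}
    (hf : ∀ t, a ≤ t → HasDerivAt f (f' t) t)
    (h0 : ∀ t, a ≤ t → 0 ≤ f' t) {s t : ℝ} (hs : a ≤ s) (hst : s ≤ t) :
    f s ≤ f t := by
  have := monoIcc_aux (f' := f') (a := s) (b := t)
    (fun u hu => hf u (hs.trans hu.1)) (fun u hu => h0 u (hs.trans hu.1.le))
  exact this (left_mem_Icc.mpr hst) (right_mem_Icc.mpr hst) hst

lemma sinh_le_exp' (x : ℝ) : Real.sinh x ≤ Real.exp x := by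
  rw [Real.sinh_eq]
  have := Real.exp_pos (-x)
  have := Real.exp_pos x
  linarith

lemma cosh_le_exp' {x : ℝ} (hx : 0 ≤ x) : Real.cosh x ≤ Real.exp x := by
  rw [Real.cosh_eq]
  have : Real.exp (-x) ≤ Real.exp x := Real.exp_le_exp.mpr (by linarith)
  linarith

lemma sinh_le_mul_cosh' {x : ℝ} (hx : 0 ≤ x) : Real.sinh x ≤ x * Real.cosh x := by
  have key : ∀ u, (0:ℝ) ≤ u → (fun z => z * Real.cosh z - Real.sinh z) 0 ≤
      (fun z => z * Real.cosh z - Real.sinh z) u := by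
    intro u hu
    have hder : ∀ z : ℝ, (0:ℝ) ≤ z → HasDerivAt (fun z => z * Real.cosh z - Real.sinh z)
        ((fun z => z * Real.sinh z) z) z := by
      intro z _
      have h1 : HasDerivAt (fun z : ℝ => z * Real.cosh z) (1 * Real.cosh z + z * Real.sinh z) z :=
        (hasDerivAt_id z).mul (Real.hasDerivAt_cosh z)
      have h2 := (h1.sub (Real.hasDerivAt_sinh z))
      refine h2.congr_deriv ?_
      ring
    have hnn : ∀ z : ℝ, (0:ℝ) ≤ z → 0 ≤ (fun z => z * Real.sinh z) z := fun z hz =>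
      mul_nonneg hz (Real.sinh_nonneg_iff.mpr hz)
    exact le_of_deriv_nonneg_Ici hder hnn le_rfl hu
  have := key x hx
  simp at this
  linarith

set_option maxHeartbeats 8000000 in
theorem stmt_7
    (δ₁ lam₀ : ℝ) (hδ : δ₁ ∈ Ioo (0:ℝ) 1) (hlam₀ : 0 < lam₀)
    (mt : ℝ → ℝ) (hmt_cont : Continuous mt)
    (hmt : ∀ t : ℝ, 0 ≤ t → mt t ∈ Icc δ₁ δ₁⁻¹) :
    ∃ c₃ : ℝ, 0 < c₃ ∧
      ∀ (lam : ℝ), lam ∈ Ioc 0 lam₀ →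
      ∀ (y y' y'' : ℝ → ℝ),
        (∀ t : ℝ, 0 ≤ t → HasDerivAt y (y' t) t) →
        (∀ t : ℝ, 0 ≤ t → HasDerivAt y' (y'' t) t) →
        (∀ t : ℝ, 0 ≤ t → y'' t = lam^2 * (mt t)^2 * y t) →
        y 0 = 0 → y' 0 = 1 →
        ∀ t : ℝ, 0 ≤ t →
          y t ≥ c₃ * Real.sinh (lam * ∫ τ in (0:ℝ)..t, mt τ) / lam ∧
          y' t ≥ c₃ * Real.cosh (lam * ∫ τ in (0:ℝ)..t, mt τ) := by
  obtain ⟨hδ0, hδ1⟩ := hδ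
  have hδi0 : (0:ℝ) < δ₁⁻¹ := by positivity
  obtain ⟨κ, hκdef⟩ : ∃ κ : ℝ, κ = Real.exp (-δ₁⁻¹) := ⟨_, rfl⟩
  have hκ0 : 0 < κ := hκdef ▸ Real.exp_pos _
  have hκ1 : κ ≤ 1 := by
    rw [hκdef, ← Real.exp_zero]
    exact Real.exp_le_exp.mpr (by linarith)
  obtain ⟨c₃, hc₃def⟩ : ∃ c₃ : ℝ, c₃ = δ₁^2 * κ^2 := ⟨_, rfl⟩
  have hc₃0 : 0 < c₃ := by rw [hc₃def]; positivity
  refine ⟨c₃, hc₃0, ?_⟩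
  rintro lam ⟨hlam, hlamle⟩ y y' y'' hy hy' hode hy0 hy'0
  obtain ⟨η, hηdef⟩ : ∃ η : ℝ → ℝ, η = fun s => ∫ τ in (0:ℝ)..s, mt τ := ⟨_, rfl⟩
  have hηd : ∀ s : ℝ, HasDerivAt η (mt s) s := by
    intro s
    rw [hηdef]
    exact (hmt_cont.integral_hasStrictDerivAt 0 s).hasDerivAt
  have hη0 : ∀ s, 0 ≤ s → 0 ≤ η s := by
    intro s hs
    simp only [hηdef]
    exact intervalIntegral.integral_nonneg hs (fun u hu => hδ0.le.trans (hmt u hu.1).1)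
  have hηle : ∀ s, 0 ≤ s → η s ≤ s * δ₁⁻¹ := by
    intro s hs
    simp only [hηdef]
    have h : (∫ τ in (0:ℝ)..s, mt τ) ≤ ∫ _τ in (0:ℝ)..s, δ₁⁻¹ :=
      intervalIntegral.integral_mono_on hs (hmt_cont.intervalIntegrable 0 s)
        intervalIntegrable_const (fun u hu => (hmt u hu.1).2)
    rw [intervalIntegral.integral_const, smul_eq_mul, sub_zero] at h
    exact h
  -- positivity of y'
  have h1 : ∀ t, 0 ≤ t → 0 < y' t := by
    by_contra hcon
    push_neg at hcon
    obtain ⟨T₀, hT₀, hT₀'⟩ := hcon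
    set S : Set ℝ := Ici 0 ∩ y' ⁻¹' Iic 0 with hSdef
    have hSne : S.Nonempty := ⟨T₀, hT₀, hT₀'⟩
    have hSbdd : BddBelow S := ⟨0, fun x hx => hx.1⟩
    have hSclosed : IsClosed S := by
      apply ContinuousOn.preimage_isClosed_of_isClosed _ isClosed_Ici isClosed_Iic
      exact fun u hu => (hy' u hu).continuousAt.continuousWithinAt
    have hTS : sInf S ∈ S := hSclosed.csInf_mem hSne hSbdd
    set T := sInf S with hTdef
    have hT0 : 0 ≤ T := hTS.1
    have hTneg : y' T ≤ 0 := hTS.2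
    have hlt : ∀ s, 0 ≤ s → s < T → 0 < y' s := by
      intro s hs hsT
      by_contra hh
      push_neg at hh
      exact absurd (csInf_le hSbdd ⟨hs, hh⟩) (not_le.mpr hsT)
    have hymono : MonotoneOn y (Icc 0 T) :=
      monoIcc_aux (fun u hu => hy u hu.1) (fun u hu => (hlt u hu.1.le hu.2).le)
    have hynn : ∀ u ∈ Icc (0:ℝ) T, 0 ≤ y u := by
      intro u hu
      have := hymono (left_mem_Icc.mpr hT0) hu hu.1
      rwa [hy0] at this
    have hy'mono : MonotoneOn y' (Icc 0 T) := by
      apply monoIcc_aux (fun u hu => hy' u hu.1)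
      intro u hu
      rw [hode u hu.1.le]
      have := hynn u (Ioo_subset_Icc_self hu)
      positivity
    have hfin := hy'mono (left_mem_Icc.mpr hT0) (right_mem_Icc.mpr hT0) hT0
    rw [hy'0] at hfin
    linarith
  have h2 : ∀ t, 0 ≤ t → 0 ≤ y t := by
    intro t ht
    have := le_of_deriv_nonneg_Ici hy (fun s hs => (h1 s hs).le) le_rfl ht
    rwa [hy0] at this
  have h3 : ∀ t, 0 ≤ t → 1 ≤ y' t := by
    intro t ht
    have := le_of_deriv_nonneg_Ici hy'
      (fun s hs => by rw [hode s hs]; have := h2 s hs; positivity) le_rfl ht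
    rwa [hy'0] at this
  have h4 : ∀ t, 0 ≤ t → t ≤ y t := by
    intro t ht
    have hder : ∀ s : ℝ, 0 ≤ s → HasDerivAt (fun u => y u - u) (y' s - 1) s :=
      fun s hs => (hy s hs).sub (hasDerivAt_id s)
    have := le_of_deriv_nonneg_Ici hder (fun s hs => by linarith [h3 s hs]) le_rfl ht
    simp only [hy0] at this
    linarith
  -- y' ≥ lam δ₁ y
  have hC : ∀ t, 0 ≤ t → lam * δ₁ * y t ≤ y' t := by
    have hφd : ∀ s : ℝ, 0 ≤ s → HasDerivAt
        (fun u => (y' u - lam * δ₁ * y u) * Real.exp (lam * δ₁ * u))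
        ((lam^2 * ((mt s)^2 - δ₁^2) * y s) * Real.exp (lam * δ₁ * s)) s := by
      intro s hs
      have hl : HasDerivAt (fun u : ℝ => lam * δ₁ * u) (lam * δ₁) s := by
        simpa using (hasDerivAt_id s).const_mul (lam * δ₁)
      have he := hl.exp
      have hin : HasDerivAt (fun u => y' u - lam * δ₁ * y u) (y'' s - lam * δ₁ * y' s) s :=
        (hy' s hs).sub ((hy s hs).const_mul (lam * δ₁))
      have := hin.mul he
      refine this.congr_deriv ?_
      rw [hode s hs]
      ring
    have hφ0 : ∀ s : ℝ, 0 ≤ s →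
        0 ≤ (lam^2 * ((mt s)^2 - δ₁^2) * y s) * Real.exp (lam * δ₁ * s) := by
      intro s hs
      have hm := (hmt s hs).1
      have hyn := h2 s hs
      have hsq : 0 ≤ (mt s)^2 - δ₁^2 := by nlinarith
      have := (Real.exp_pos (lam * δ₁ * s)).le
      positivity
    intro t ht
    have key := le_of_deriv_nonneg_Ici hφd hφ0 le_rfl ht
    simp only [hy0, hy'0, mul_zero, sub_zero, Real.exp_zero, mul_one] at key
    have hexp := Real.exp_pos (lam * δ₁ * t)
    nlinarith [key, hexp]
  -- H = y y' exp(-2 lam η) is monotone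
  have hHd : ∀ s : ℝ, 0 ≤ s → HasDerivAt
      (fun u => y u * y' u * Real.exp (-(2 * lam) * η u))
      ((y' s - lam * mt s * y s)^2 * Real.exp (-(2 * lam) * η s)) s := by
    intro s hs
    have h1' : HasDerivAt (fun u => -(2 * lam) * η u) (-(2 * lam) * mt s) s :=
      (hηd s).const_mul (-(2 * lam))
    have he := h1'.exp
    have hyy : HasDerivAt (fun u => y u * y' u) (y' s * y' s + y s * y'' s) s :=
      (hy s hs).mul (hy' s hs)
    have := hyy.mul he
    refine this.congr_deriv ?_
    rw [hode s hs]
    ring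
  intro t ht
  rw [show (∫ τ in (0:ℝ)..t, mt τ) = η t by simp only [hηdef]]
  have hηt := hη0 t ht
  have hx0 : 0 ≤ lam * η t := by positivity
  have hEt0 : (0:ℝ) < Real.exp (lam * η t) := Real.exp_pos _
  rw [ge_iff_le, ge_iff_le]
  have hgoal : c₃ * Real.sinh (lam * η t) / lam ≤ y t ∧ c₃ * Real.cosh (lam * η t) ≤ y' t := by
    rcases le_or_gt (lam * t) 1 with hcase | hcase
    · -- small time region
      have hxle : lam * η t ≤ δ₁⁻¹ := by
        have h5 := hηle t ht
        calc lam * η t ≤ lam * (t * δ₁⁻¹) := by nlinarith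
          _ = (lam * t) * δ₁⁻¹ := by ring
          _ ≤ 1 * δ₁⁻¹ := by nlinarith
          _ = δ₁⁻¹ := one_mul _
      have hcosh_le : Real.cosh (lam * η t) ≤ Real.exp δ₁⁻¹ := by
        calc Real.cosh (lam * η t) ≤ Real.cosh δ₁⁻¹ := by
              rw [Real.cosh_le_cosh, abs_of_nonneg hx0, abs_of_nonneg hδi0.le]
              exact hxle
          _ ≤ Real.exp δ₁⁻¹ := cosh_le_exp' hδi0.le
      have hκe : κ * Real.exp δ₁⁻¹ = 1 := by
        rw [hκdef, ← Real.exp_add]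
        simp
      have hkey : c₃ * Real.exp δ₁⁻¹ ≤ δ₁ := by
        have : c₃ * Real.exp δ₁⁻¹ = δ₁^2 * κ * (κ * Real.exp δ₁⁻¹) := by
          rw [hc₃def]; ring
        rw [this, hκe, mul_one]
        nlinarith
      constructor
      · rw [div_le_iff₀ hlam]
        have hsc := sinh_le_mul_cosh' hx0
        calc c₃ * Real.sinh (lam * η t)
            ≤ c₃ * ((lam * η t) * Real.cosh (lam * η t)) := by nlinarith
          _ ≤ c₃ * ((lam * η t) * Real.exp δ₁⁻¹) := by
              nlinarith [mul_nonneg (mul_nonneg hc₃0.le hx0) (sub_nonneg.mpr hcosh_le)]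
          _ = (c₃ * Real.exp δ₁⁻¹) * (lam * η t) := by ring
          _ ≤ δ₁ * (lam * η t) := by nlinarith
          _ ≤ δ₁ * (lam * (t * δ₁⁻¹)) := by
              nlinarith [mul_nonneg (mul_nonneg hδ0.le hlam.le) (sub_nonneg.mpr (hηle t ht))]
          _ = (δ₁ * δ₁⁻¹) * (lam * t) := by ring
          _ = lam * t := by rw [mul_inv_cancel₀ hδ0.ne', one_mul]
          _ ≤ lam * y t := by nlinarith [h4 t ht]
          _ = y t * lam := mul_comm _ _
      · have h3t := h3 t ht
        have : c₃ * Real.cosh (lam * η t) ≤ c₃ * Real.exp δ₁⁻¹ := by nlinarith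
        have hδ1' : δ₁ ≤ 1 := hδ1.le
        linarith [hkey]
    · -- large time region
      obtain ⟨t₀, ht₀def⟩ : ∃ t₀ : ℝ, t₀ = lam⁻¹ := ⟨_, rfl⟩
      have ht₀pos : 0 < t₀ := by rw [ht₀def]; positivity
      have hlamt₀ : lam * t₀ = 1 := by rw [ht₀def]; exact mul_inv_cancel₀ hlam.ne'
      have ht₀t : t₀ ≤ t := by
        rw [ht₀def, inv_eq_one_div, div_le_iff₀ hlam]
        nlinarith
      have hηt₀ := hη0 t₀ ht₀pos.le
      have hηt₀le : lam * η t₀ ≤ δ₁⁻¹ := by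
        have h5 := hηle t₀ ht₀pos.le
        calc lam * η t₀ ≤ lam * (t₀ * δ₁⁻¹) := by nlinarith
          _ = (lam * t₀) * δ₁⁻¹ := by ring
          _ = δ₁⁻¹ := by rw [hlamt₀, one_mul]
      -- product lower bound
      have hprod : ∀ s, t₀ ≤ s →
          t₀ * κ^2 * (Real.exp (lam * η s))^2 ≤ y s * y' s := by
        intro s hs
        have hs0 : 0 ≤ s := ht₀pos.le.trans hs
        have hmono := le_of_deriv_nonneg_Ici hHd
          (fun u _ => mul_nonneg (sq_nonneg _) (Real.exp_pos _).le) ht₀pos.le hs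
        have hA : t₀ * κ^2 ≤ y t₀ * y' t₀ * Real.exp (-(2 * lam) * η t₀) := by
          have e1 : κ^2 ≤ Real.exp (-(2 * lam) * η t₀) := by
            rw [hκdef, sq, ← Real.exp_add]
            exact Real.exp_le_exp.mpr (by nlinarith)
          have h4t := h4 t₀ ht₀pos.le
          have h3t := h3 t₀ ht₀pos.le
          have hE := Real.exp_pos (-(2 * lam) * η t₀)
          calc t₀ * κ^2 ≤ t₀ * Real.exp (-(2 * lam) * η t₀) := by nlinarith
            _ ≤ y t₀ * Real.exp (-(2 * lam) * η t₀) := by nlinarith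
            _ = y t₀ * 1 * Real.exp (-(2 * lam) * η t₀) := by ring
            _ ≤ y t₀ * y' t₀ * Real.exp (-(2 * lam) * η t₀) := by
                nlinarith [mul_nonneg (mul_nonneg (h2 t₀ ht₀pos.le) hE.le) (sub_nonneg.mpr h3t)]
        have step := hA.trans hmono
        have hcancel : Real.exp (-(2 * lam) * η s) * (Real.exp (lam * η s))^2 = 1 := by
          rw [sq, ← Real.exp_add, ← Real.exp_add,
            show -(2 * lam) * η s + (lam * η s + lam * η s) = 0 by ring, Real.exp_zero]
        have h6 := mul_le_mul_of_nonneg_right step (sq_nonneg (Real.exp (lam * η s)))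
        calc t₀ * κ^2 * (Real.exp (lam * η s))^2
            ≤ y s * y' s * Real.exp (-(2 * lam) * η s) * (Real.exp (lam * η s))^2 := h6
          _ = y s * y' s * (Real.exp (-(2 * lam) * η s) * (Real.exp (lam * η s))^2) := by ring
          _ = y s * y' s := by rw [hcancel, mul_one]
      -- exponential lower bound on y'
      have hy'exp : ∀ s, t₀ ≤ s → δ₁ * κ * Real.exp (lam * η s) ≤ y' s := by
        intro s hs
        have hs0 : 0 ≤ s := ht₀pos.le.trans hs
        have hp := hprod s hs
        have hCs := hC s hs0
        have hy's := h3 s hs0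
        have hEs := Real.exp_pos (lam * η s)
        have hsq : (δ₁ * κ * Real.exp (lam * η s))^2 ≤ (y' s)^2 := by
          have e1 : (δ₁ * κ * Real.exp (lam * η s))^2
              = δ₁^2 * (κ^2 * (Real.exp (lam * η s))^2) := by ring
          have e2 : lam * δ₁ * (y s * y' s) ≤ y' s * y' s :=  by nlinarith [h2 s hs0]
          have e3 : lam * δ₁ * (t₀ * κ^2 * (Real.exp (lam * η s))^2)
              = δ₁ * (κ^2 * (Real.exp (lam * η s))^2) := by
            rw [ht₀def]
            field_simp
          have e4 : δ₁^2 * (κ^2 * (Real.exp (lam * η s))^2)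
              ≤ δ₁ * (κ^2 * (Real.exp (lam * η s))^2) := by nlinarith
          have e5 : lam * δ₁ * (t₀ * κ^2 * (Real.exp (lam * η s))^2)
              ≤ lam * δ₁ * (y s * y' s) := by
            nlinarith [mul_nonneg (mul_nonneg hlam.le hδ0.le) (sub_nonneg.mpr hp)]
          nlinarith
        have := Real.sqrt_le_sqrt hsq
        rwa [Real.sqrt_sq (by positivity), Real.sqrt_sq (by linarith)] at this
      have hδκ1 : δ₁ * κ ≤ 1 := by nlinarith
      constructor
      · -- y bound via Ψ
        have hΨd : ∀ s, t₀ ≤ s → HasDerivAt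
            (fun u => y u - (δ₁^2 * κ / lam) * Real.exp (lam * η u))
            (y' s - δ₁^2 * κ * mt s * Real.exp (lam * η s)) s := by
          intro s hs
          have h1' : HasDerivAt (fun u => lam * η u) (lam * mt s) s := (hηd s).const_mul lam
          have he := h1'.exp
          have := (hy s (ht₀pos.le.trans hs)).sub (he.const_mul (δ₁^2 * κ / lam))
          refine this.congr_deriv ?_
          field_simp
        have hΨ0 : ∀ s, t₀ ≤ s →
            0 ≤ y' s - δ₁^2 * κ * mt s * Real.exp (lam * η s) := by
          intro s hs
          have h := hy'exp s hs
          have hm := hmt s (ht₀pos.le.trans hs)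
          have hE := (Real.exp_pos (lam * η s)).le
          have hmm : δ₁^2 * mt s ≤ δ₁ := by
            calc δ₁^2 * mt s ≤ δ₁^2 * δ₁⁻¹ := by nlinarith [hm.2]
              _ = δ₁ := by field_simp
          nlinarith [mul_nonneg (mul_nonneg hκ0.le hE)
            (by linarith : (0:ℝ) ≤ δ₁ - δ₁^2 * mt s)]
        have hΨ := le_of_deriv_nonneg_Ici hΨd hΨ0 le_rfl ht₀t
        have hcap : κ * Real.exp (lam * η t₀) ≤ 1 := by
          rw [hκdef, ← Real.exp_add, ← Real.exp_zero]
          exact Real.exp_le_exp.mpr (by linarith)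
        have hyineq : δ₁^2 * κ * Real.exp (lam * η t) ≤ lam * y t := by
          have h5 := mul_le_mul_of_nonneg_left hΨ hlam.le
          have e1 : lam * (y t₀ - δ₁^2 * κ / lam * Real.exp (lam * η t₀))
              = lam * y t₀ - δ₁^2 * κ * Real.exp (lam * η t₀) := by
            field_simp
          have e2 : lam * (y t - δ₁^2 * κ / lam * Real.exp (lam * η t))
              = lam * y t - δ₁^2 * κ * Real.exp (lam * η t) := by
            field_simp
          rw [e1, e2] at h5
          have h6 : 1 ≤ lam * y t₀ := by
            have := h4 t₀ ht₀pos.le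
            calc (1:ℝ) = lam * t₀ := hlamt₀.symm
              _ ≤ lam * y t₀ := by nlinarith
          have h7 : δ₁^2 * κ * Real.exp (lam * η t₀) ≤ 1 := by
            have e3 : δ₁^2 * κ * Real.exp (lam * η t₀)
                = δ₁^2 * (κ * Real.exp (lam * η t₀)) := by ring
            rw [e3]
            nlinarith [mul_nonneg hκ0.le (Real.exp_pos (lam * η t₀)).le]
          linarith
        rw [div_le_iff₀ hlam]
        calc c₃ * Real.sinh (lam * η t) ≤ c₃ * Real.exp (lam * η t) := by
              nlinarith [sinh_le_exp' (lam * η t)]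
          _ = δ₁^2 * κ * Real.exp (lam * η t) * κ := by rw [hc₃def]; ring
          _ ≤ δ₁^2 * κ * Real.exp (lam * η t) * 1 := by
              nlinarith [mul_nonneg (mul_nonneg (sq_nonneg δ₁) hκ0.le) hEt0.le]
          _ = δ₁^2 * κ * Real.exp (lam * η t) := by ring
          _ ≤ lam * y t := hyineq
          _ = y t * lam := mul_comm _ _
      · -- y' bound
        have h := hy'exp t ht₀t
        calc c₃ * Real.cosh (lam * η t) ≤ c₃ * Real.exp (lam * η t) := by
              nlinarith [cosh_le_exp' hx0]
          _ = (δ₁ * κ) * (δ₁ * κ * Real.exp (lam * η t)) := by rw [hc₃def]; ring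
          _ ≤ 1 * (δ₁ * κ * Real.exp (lam * η t)) := by
              nlinarith [mul_nonneg (mul_nonneg hδ0.le hκ0.le) hEt0.le]
          _ = δ₁ * κ * Real.exp (lam * η t) := one_mul _
          _ ≤ y' t := h
  exact hgoal
end

section
/- Let q > 0 and a, R > 0. For 0 ≤ t < T, ∫_{a/(2⟨t⟩)}^{a/⟨t⟩} (1 − e^{−2λ(T−t)})/(2(T−t)) · λ^{q−1} dλ ≥ c·⟨T⟩^{−1}·⟨t⟩^{−q} for a constant c > 0 depending only on q and a (with ⟨t⟩ = √(1+t²)). -/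
open Set Real

set_option maxHeartbeats 1000000 in
theorem stmt_11 (q a R : ℝ) (hq : 0 < q) (ha : 0 < a) (hR : 0 < R) :
    ∃ c : ℝ, 0 < c ∧
      ∀ (T t : ℝ), 0 ≤ t → t < T →
        (∫ lam in (a / (2 * Real.sqrt (1 + t^2)))..(a / Real.sqrt (1 + t^2)),
            (1 - Real.exp (-2 * lam * (T - t))) / (2 * (T - t)) * lam ^ (q - 1))
          ≥ c * (Real.sqrt (1 + T^2))⁻¹ * Real.sqrt (1 + t^2) ^ (-q) := by
  have hmin : (0:ℝ) < min 1 a := lt_min one_pos ha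
  set K : ℝ := Real.exp (-1) * min 1 a / 2 with hKdef
  have hKpos : 0 < K := by
    have := Real.exp_pos (-1); positivity
  have h2q : (2:ℝ) ^ (-q) < 1 :=
    Real.rpow_lt_one_of_one_lt_of_neg (by norm_num) (by linarith)
  have h2qpos : (0:ℝ) < (2:ℝ) ^ (-q) := Real.rpow_pos_of_pos (by norm_num) _
  refine ⟨K * a ^ q * (1 - 2 ^ (-q)) / q, ?_, ?_⟩
  · have h1 : (0:ℝ) < 1 - 2 ^ (-q) := by linarith
    have h2 : (0:ℝ) < a ^ q := Real.rpow_pos_of_pos ha q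
    positivity
  intro T t ht htT
  set s : ℝ := Real.sqrt (1 + t ^ 2) with hsdef
  set S : ℝ := Real.sqrt (1 + T ^ 2) with hSdef
  have hs1 : 1 ≤ s := by
    nlinarith [Real.sq_sqrt (show (0:ℝ) ≤ 1 + t ^ 2 by positivity),
      Real.sqrt_nonneg (1 + t ^ 2), sq_nonneg t]
  have hs0 : 0 < s := lt_of_lt_of_le one_pos hs1
  have hsS : s ≤ S := Real.sqrt_le_sqrt (by nlinarith)
  have hS0 : 0 < S := lt_of_lt_of_le hs0 hsS
  have hτ : 0 < T - t := by linarith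
  have hTS : T ≤ S := by
    have hSq : S ^ 2 = 1 + T ^ 2 := Real.sq_sqrt (by positivity)
    nlinarith [Real.sqrt_nonneg (1 + T ^ 2)]
  have hτS : T - t ≤ S := by linarith
  set u : ℝ := a / (2 * s) with hudef
  set v : ℝ := a / s with hvdef
  have hu0 : 0 < u := by positivity
  have hv0 : 0 < v := by positivity
  have huv : u ≤ v := by
    rw [hudef, hvdef, div_le_div_iff₀ (by positivity) hs0]
    nlinarith
  -- pointwise bound
  have hpt : ∀ lam ∈ Icc u v,
      K / S * lam ^ (q - 1) ≤
        (1 - Real.exp (-2 * lam * (T - t))) / (2 * (T - t)) * lam ^ (q - 1) := by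
    intro lam hlam
    have hlu : u ≤ lam := hlam.1
    have hl0 : 0 < lam := lt_of_lt_of_le hu0 hlu
    have hlam_s : a ≤ 2 * lam * s := by
      rw [hudef, div_le_iff₀ (by positivity)] at hlu; nlinarith
    have hrp : (0:ℝ) ≤ lam ^ (q - 1) := Real.rpow_nonneg hl0.le _
    refine mul_le_mul_of_nonneg_right ?_ hrp
    set x : ℝ := 2 * lam * (T - t) with hxdef
    rw [show -2 * lam * (T - t) = -x by rw [hxdef]; ring]
    have hx0 : 0 < x := by positivity
    have hE0 : 0 < Real.exp (-x) := Real.exp_pos _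
    have h1 : (1 + x) * Real.exp (-x) ≤ 1 := by
      have h2 := mul_le_mul_of_nonneg_right (Real.add_one_le_exp x) hE0.le
      rwa [← Real.exp_add, add_neg_cancel, Real.exp_zero, add_comm x 1] at h2
    rw [div_le_div_iff₀ hS0 (by positivity)]
    rcases le_total x 1 with hx1 | hx1
    · -- small x : 1 - exp(-x) ≥ x * exp(-x) ≥ x * exp(-1)
      have hmono : Real.exp (-1) ≤ Real.exp (-x) := Real.exp_le_exp.mpr (by linarith)
      have hKa : K ≤ Real.exp (-1) * a / 2 := by
        rw [hKdef]
        have : min 1 a ≤ a := min_le_right _ _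
        nlinarith [Real.exp_pos (-1)]
      -- goal : K * (2*(T-t)) ≤ (1 - exp(-x)) * S
      have hstep : x * Real.exp (-1) ≤ 1 - Real.exp (-x) := by
        nlinarith [mul_le_mul_of_nonneg_left hmono hx0.le, h1]
      have hep : (0:ℝ) < Real.exp (-1) := Real.exp_pos _
      have c1 : K * (2 * (T - t)) ≤ Real.exp (-1) * a * (T - t) := by nlinarith
      have c2 : Real.exp (-1) * a * (T - t) ≤ Real.exp (-1) * (2 * lam * s) * (T - t) :=
        mul_le_mul_of_nonneg_right (mul_le_mul_of_nonneg_left hlam_s hep.le) hτ.le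
      have c3 : Real.exp (-1) * (2 * lam * s) * (T - t)
          ≤ Real.exp (-1) * (2 * lam * S) * (T - t) := by
        have := mul_le_mul_of_nonneg_right
          (mul_le_mul_of_nonneg_left hsS (by positivity : (0:ℝ) ≤ Real.exp (-1) * (2 * lam)))
          hτ.le
        nlinarith [this]
      have c4 : Real.exp (-1) * (2 * lam * S) * (T - t) = x * Real.exp (-1) * S := by
        rw [hxdef]; ring
      have c5 : x * Real.exp (-1) * S ≤ (1 - Real.exp (-x)) * S :=
        mul_le_mul_of_nonneg_right hstep hS0.le
      linarith
    · -- large x : 1 - exp(-x) ≥ 1 - exp(-1) ≥ exp(-1)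
      have hmono : Real.exp (-x) ≤ Real.exp (-1) := Real.exp_le_exp.mpr (by linarith)
      have hep : (0:ℝ) < Real.exp (-1) := Real.exp_pos _
      have he2 : Real.exp (-1) ≤ 1 - Real.exp (-1) := by
        have h2e : (2:ℝ) ≤ Real.exp 1 := by
          have := Real.add_one_le_exp (1:ℝ); linarith
        have hprod : Real.exp 1 * Real.exp (-1) = 1 := by
          rw [← Real.exp_add]; norm_num
        have := mul_le_mul_of_nonneg_right h2e hep.le
        linarith
      have hK1 : K ≤ Real.exp (-1) / 2 := by
        rw [hKdef]
        have : min 1 a ≤ 1 := min_le_left _ _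
        nlinarith [Real.exp_pos (-1)]
      have d1 : K * (2 * (T - t)) ≤ Real.exp (-1) * (T - t) := by
        nlinarith [mul_le_mul_of_nonneg_right hK1 hτ.le]
      have d2 : Real.exp (-1) * (T - t) ≤ Real.exp (-1) * S :=
        mul_le_mul_of_nonneg_left hτS hep.le
      have d3 : Real.exp (-1) * S ≤ (1 - Real.exp (-x)) * S :=
        mul_le_mul_of_nonneg_right (by linarith) hS0.le
      linarith
  -- integrability
  have hcts : ContinuousOn
      (fun lam : ℝ => (1 - Real.exp (-2 * lam * (T - t))) / (2 * (T - t)) * lam ^ (q - 1))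
      (Icc u v) := by
    apply ContinuousOn.mul
    · refine (Continuous.div_const ?_ _).continuousOn
      exact continuous_const.sub
        (((continuous_const.mul continuous_id).mul continuous_const).rexp)
    · exact ContinuousOn.rpow_const continuousOn_id
        (fun x hx => Or.inl (ne_of_gt (lt_of_lt_of_le hu0 hx.1)))
  have hcts2 : ContinuousOn (fun lam : ℝ => K / S * lam ^ (q - 1)) (Icc u v) := by
    apply ContinuousOn.mul continuousOn_const
    exact ContinuousOn.rpow_const continuousOn_id
      (fun x hx => Or.inl (ne_of_gt (lt_of_lt_of_le hu0 hx.1)))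
  have hint1 : IntervalIntegrable
      (fun lam : ℝ => (1 - Real.exp (-2 * lam * (T - t))) / (2 * (T - t)) * lam ^ (q - 1))
      MeasureTheory.volume u v := by
    apply ContinuousOn.intervalIntegrable
    rwa [Set.uIcc_of_le huv]
  have hint2 : IntervalIntegrable (fun lam : ℝ => K / S * lam ^ (q - 1))
      MeasureTheory.volume u v := by
    apply ContinuousOn.intervalIntegrable
    rwa [Set.uIcc_of_le huv]
  have hmono := intervalIntegral.integral_mono_on huv hint2 hint1 hpt
  -- compute lower integral
  have hcomp : (∫ lam in u..v, K / S * lam ^ (q - 1))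
      = K / S * ((v ^ q - u ^ q) / q) := by
    rw [intervalIntegral.integral_const_mul, integral_rpow (Or.inl (by linarith))]
    ring_nf
  have hvq : v ^ q = a ^ q / s ^ q := Real.div_rpow ha.le hs0.le q
  have huq : u ^ q = a ^ q * (2:ℝ) ^ (-q) / s ^ q := by
    rw [hudef, Real.div_rpow ha.le (by positivity), Real.mul_rpow (by norm_num) hs0.le,
      Real.rpow_neg (by norm_num)]
    field_simp
  have hsq : s ^ (-q) = (s ^ q)⁻¹ := by
    rw [Real.rpow_neg hs0.le]
  have hsqpos : (0:ℝ) < s ^ q := Real.rpow_pos_of_pos hs0 q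
  have hfinal : K * a ^ q * (1 - 2 ^ (-q)) / q * S⁻¹ * s ^ (-q)
      = K / S * ((v ^ q - u ^ q) / q) := by
    rw [hvq, huq, hsq]
    field_simp
  calc (∫ lam in u..v,
          (1 - Real.exp (-2 * lam * (T - t))) / (2 * (T - t)) * lam ^ (q - 1))
      ≥ (∫ lam in u..v, K / S * lam ^ (q - 1)) := hmono
    _ = K / S * ((v ^ q - u ^ q) / q) := hcomp
    _ = K * a ^ q * (1 - 2 ^ (-q)) / q * S⁻¹ * s ^ (-q) := hfinal.symm
end
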